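/- (Lemma 3, determinant lower bound for a product of matrices) Let B ∈ ℝ^{p×q} and D ∈ ℝ^{q×r}, and let σ_b² denote the smallest eigenvalue of BᵀB. Then det( (BD)ᵀ(BD) ) ≥ (σ_b²)^r · det( DᵀD ). -/

import Mathlib

open Matrix

section Aux

variable {n : Type*} [Fintype n] [DecidableEq n]

/-- determinant of a real PSD matrix is nonnegative -/
lemma aux_det_nonneg {A : Matrix n n ℝ} (hA : A.PosSemidef) : 0 ≤ A.det := by
  rw [hA.isHermitian.det_eq_prod_eigenvalues]
  exact Finset.prod_nonneg fun i _ => by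
    simpa using hA.eigenvalues_nonneg i

/-- `det (1 + E) ≥ 1` when `E` is PSD. -/
lemma aux_one_le_det_one_add {E : Matrix n n ℝ} (hE : E.PosSemidef) :
    1 ≤ (1 + E).det := by
  set U : Matrix n n ℝ := (hE.isHermitian.eigenvectorUnitary : Matrix n n ℝ) with hU
  have hUU : U * star U = 1 :=
    (Matrix.mem_unitaryGroup_iff).mp hE.isHermitian.eigenvectorUnitary.2
  have h1 : (1 : Matrix n n ℝ) + E
      = U * (1 + diagonal (RCLike.ofReal ∘ hE.isHermitian.eigenvalues)) * star U := by
    rw [mul_add, add_mul, mul_one, hUU]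
    conv_lhs => rw [hE.isHermitian.spectral_theorem, Unitary.conjStarAlgAut_apply]
  rw [h1, Matrix.det_mul_right_comm, hUU, one_mul,
    show (1 : Matrix n n ℝ) = diagonal (fun _ => (1:ℝ)) by simp, diagonal_add,
    det_diagonal]
  have h2 : ∏ _i : n, (1:ℝ) ≤ ∏ i : n, ((1:ℝ) + (RCLike.ofReal ∘ hE.isHermitian.eigenvalues) i) := by
    refine Finset.prod_le_prod (fun i _ => zero_le_one) fun i _ => ?_
    have := hE.eigenvalues_nonneg i
    simp only [Function.comp_apply, RCLike.ofReal_real_eq_id, id_eq]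
    linarith
  simpa using h2

/-- determinant is monotone with respect to adding a PSD matrix to a PSD matrix. -/
lemma aux_det_le_det_add {A C : Matrix n n ℝ} (hA : A.PosSemidef) (hC : C.PosSemidef) :
    A.det ≤ (A + C).det := by
  by_cases hdet : A.det = 0
  · rw [hdet]; exact aux_det_nonneg (hA.add hC)
  · obtain ⟨S, hS, hSS⟩ : ∃ S : Matrix n n ℝ, S.PosSemidef ∧ S * S = A := by
      open scoped MatrixOrder in
      exact ⟨CFC.sqrt A, (CFC.sqrt_nonneg A).posSemidef, CFC.sqrt_mul_sqrt_self A hA.nonneg⟩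
    have hdS : S.det ≠ 0 := fun h => hdet (by rw [← hSS, det_mul, h, mul_zero])
    have hSi : S * S⁻¹ = 1 := mul_nonsing_inv S (isUnit_iff_ne_zero.mpr hdS)
    have hiS : S⁻¹ * S = 1 := nonsing_inv_mul S (isUnit_iff_ne_zero.mpr hdS)
    have hMpsd : (S⁻¹ * C * S⁻¹).PosSemidef := by
      have := hC.conjTranspose_mul_mul_same S⁻¹
      rwa [hS.isHermitian.inv.eq] at this
    have key : A + C = S * (1 + S⁻¹ * C * S⁻¹) * S := by
      rw [mul_add, mul_one, add_mul, hSS]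
      congr 1
      symm
      calc S * (S⁻¹ * C * S⁻¹) * S = (S * S⁻¹) * C * (S⁻¹ * S) := by
            simp only [mul_assoc]
        _ = C := by rw [hSi, hiS, one_mul, mul_one]
    rw [key, det_mul, det_mul]
    have h1 : (1:ℝ) ≤ (1 + S⁻¹ * C * S⁻¹).det := aux_one_le_det_one_add hMpsd
    have hdSS : S.det * S.det = A.det := by rw [← det_mul, hSS]
    nlinarith [aux_det_nonneg hA, aux_det_nonneg hS]

/-- a Hermitian real matrix minus its smallest eigenvalue times the identity is PSD. -/
lemma aux_sub_smul_posSemidef {A : Matrix n n ℝ} (hA : A.IsHermitian) {c : ℝ}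
    (hc : ∀ i, c ≤ hA.eigenvalues i) : (A - c • 1).PosSemidef := by
  set U : Matrix n n ℝ := (hA.eigenvectorUnitary : Matrix n n ℝ) with hU
  have hUU : U * star U = 1 := (Matrix.mem_unitaryGroup_iff).mp hA.eigenvectorUnitary.2
  have h1 : A - c • 1 = U * (diagonal (fun i => hA.eigenvalues i - c)) * star U := by
    have hd : diagonal (fun i => hA.eigenvalues i - c)
        = diagonal (RCLike.ofReal ∘ hA.eigenvalues) - c • 1 := by
      simp only [RCLike.ofReal_real_eq_id]
      rw [Matrix.smul_one_eq_diagonal, diagonal_sub]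
      rfl
    rw [hd, mul_sub, sub_mul]
    conv_lhs => rw [hA.spectral_theorem, Unitary.conjStarAlgAut_apply]
    congr 1
    rw [Matrix.mul_smul, Matrix.mul_one, Matrix.smul_mul, hUU]
  rw [h1]
  have hdpsd : (diagonal (fun i => hA.eigenvalues i - c)).PosSemidef :=
    PosSemidef.diagonal fun i => sub_nonneg.mpr (hc i)
  simpa [star_eq_conjTranspose] using hdpsd.mul_mul_conjTranspose_same U

end Aux

/-- **Lemma 3** (determinant lower bound for a product of matrices). If `σ_b²` is the
smallest eigenvalue of the real positive semidefinite matrix `Bᵀ B`, then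
`det((BD)ᵀ (BD)) ≥ (σ_b²)^r · det(Dᵀ D)`. -/
theorem lemma3_det_lower_bound
    (p q r : ℕ) (B : Matrix (Fin p) (Fin q) ℝ) (D : Matrix (Fin q) (Fin r) ℝ)
    (hB : (Bᵀ * B).IsHermitian) (σb2 : ℝ)
    (hσ : σb2 = ⨅ i : Fin q, hB.eigenvalues i) :
    σb2 ^ r * (Dᵀ * D).det ≤ ((B * D)ᵀ * (B * D)).det := by
  have hBt : Bᵀ = Bᴴ := (conjTranspose_eq_transpose_of_trivial B).symm
  have hDt : Dᵀ = Dᴴ := (conjTranspose_eq_transpose_of_trivial D).symm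
  have hM : (Bᵀ * B).PosSemidef := by
    rw [hBt]; exact posSemidef_conjTranspose_mul_self B
  have hσle : ∀ i, σb2 ≤ hB.eigenvalues i := by
    intro i
    rw [hσ]
    exact ciInf_le (Finite.bddBelow_range _) i
  have hσ0 : 0 ≤ σb2 := by
    rw [hσ]
    exact Real.iInf_nonneg fun i => by
      have := hM.eigenvalues_nonneg i
      convert this using 2
  have hsub : ((Bᵀ * B) - σb2 • 1).PosSemidef := aux_sub_smul_posSemidef hB hσle
  have hE : (Dᵀ * ((Bᵀ * B) - σb2 • 1) * D).PosSemidef := by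
    have := hsub.conjTranspose_mul_mul_same D
    rwa [← hDt] at this
  have hA0 : (σb2 • (Dᵀ * D)).PosSemidef := by
    have h1 : ((σb2 • 1 : Matrix (Fin q) (Fin q) ℝ)).PosSemidef := by
      rw [Matrix.smul_one_eq_diagonal]
      exact PosSemidef.diagonal fun _ => hσ0
    have := h1.conjTranspose_mul_mul_same D
    rw [← hDt] at this
    rwa [Matrix.mul_smul, Matrix.mul_one, Matrix.smul_mul] at this
  have hsum : σb2 • (Dᵀ * D) + Dᵀ * ((Bᵀ * B) - σb2 • 1) * D = Dᵀ * (Bᵀ * B) * D := by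
    rw [Matrix.mul_sub, Matrix.sub_mul, Matrix.mul_smul, Matrix.mul_one, Matrix.smul_mul]
    abel
  have hgoal : ((B * D)ᵀ * (B * D)) = Dᵀ * (Bᵀ * B) * D := by
    rw [transpose_mul]
    simp only [Matrix.mul_assoc]
  calc σb2 ^ r * (Dᵀ * D).det = (σb2 • (Dᵀ * D)).det := by
        rw [det_smul, Fintype.card_fin]
    _ ≤ (σb2 • (Dᵀ * D) + Dᵀ * ((Bᵀ * B) - σb2 • 1) * D).det :=
        aux_det_le_det_add hA0 hE
    _ = ((B * D)ᵀ * (B * D)).det := by rw [hsum, hgoal]
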